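/- Let A, C ∈ ℂ^{n×n} be Hermitian with C indefinite. If there exists σ_0 ∈ ℝ such that the pair (A − σ_0I, C) is singular, i.e., det(A − σ_0I − μC) = 0 for all μ ∈ ℝ, then for every μ ∈ ℝ there exists a unit vector x ∈ ℂ^n with (A − μC)x = σ_0 x and x^H C x = 0; in particular, (μ, σ_0) is a 2D-eigenvalue of (A, C) for every μ ∈ ℝ, so (A, C) has infinitely many 2D-eigenvalues. -/

import Mathlib

open Matrix

/-- The eigenvalues of a Hermitian matrix, sorted in decreasing order:
index `0` is the largest, index `n-1` the smallest. -/
noncomputable def sortedEig {n : ℕ} {M : Matrix (Fin n) (Fin n) ℂ} (hM : M.IsHermitian) :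
    Fin n → ℝ :=
  fun i => (hM.eigenvalues ∘ Tuple.sort hM.eigenvalues) i.rev

/-- The parameter matrix `H(μ) = A - μ C`. -/
noncomputable def pencil {n : ℕ} (A C : Matrix (Fin n) (Fin n) ℂ) (μ : ℝ) :
    Matrix (Fin n) (Fin n) ℂ :=
  A - (μ : ℂ) • C

theorem pencil_isHermitian {n : ℕ} {A C : Matrix (Fin n) (Fin n) ℂ}
    (hA : A.IsHermitian) (hC : C.IsHermitian) (μ : ℝ) :
    (pencil A C μ).IsHermitian := by
  unfold pencil
  refine hA.sub ?_
  unfold Matrix.IsHermitian at *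
  rw [Matrix.conjTranspose_smul, hC]
  simp

/-- `(μ, λ, x)` is a 2D-eigentriple of the pair `(A, C)`:
`(A - μC)x = λx`, `xᴴCx = 0` and `xᴴx = 1`. -/
def Is2DEigentriple {n : ℕ} (A C : Matrix (Fin n) (Fin n) ℂ) (μ lam : ℝ)
    (x : Fin n → ℂ) : Prop :=
  (A - (μ : ℂ) • C) *ᵥ x = (lam : ℂ) • x ∧ star x ⬝ᵥ (C *ᵥ x) = 0 ∧ star x ⬝ᵥ x = 1

/-- `(μ, λ)` is a 2D-eigenvalue of the pair `(A, C)`. -/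
def Is2DEigenvalue {n : ℕ} (A C : Matrix (Fin n) (Fin n) ℂ) (μ lam : ℝ) : Prop :=
  ∃ x : Fin n → ℂ, Is2DEigentriple A C μ lam x

/-- A Hermitian matrix is indefinite: it has a positive and a negative eigenvalue. -/
def IsIndefinite {n : ℕ} {M : Matrix (Fin n) (Fin n) ℂ} (hM : M.IsHermitian) : Prop :=
  (∃ i, 0 < hM.eigenvalues i) ∧ (∃ j, hM.eigenvalues j < 0)


section aux2
variable {n : ℕ}

lemma herm_dot {H : Matrix (Fin n) (Fin n) ℂ} (hH : H.IsHermitian)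
    (y z : Fin n → ℂ) : star y ⬝ᵥ (H *ᵥ z) = star (H *ᵥ y) ⬝ᵥ z := by
  rw [Matrix.star_mulVec, hH.eq, Matrix.dotProduct_mulVec]

lemma cont_dot_left (w : Fin n → ℂ) : Continuous fun x : Fin n → ℂ => star x ⬝ᵥ w := by
  simp only [dotProduct, Pi.star_apply]
  exact continuous_finset_sum _ fun i _ => ((continuous_apply i).star).mul continuous_const

lemma cont_dot_self : Continuous fun x : Fin n → ℂ => star x ⬝ᵥ x := by
  simp only [dotProduct, Pi.star_apply]
  exact continuous_finset_sum _ fun i _ => ((continuous_apply i).star).mul (continuous_apply i)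

lemma cont_dot_right (w : Fin n → ℂ) : Continuous fun x : Fin n → ℂ => w ⬝ᵥ x := by
  simp only [dotProduct]
  exact continuous_finset_sum _ fun i _ => continuous_const.mul (continuous_apply i)

lemma cont_mulVec (M : Matrix (Fin n) (Fin n) ℂ) : Continuous fun x : Fin n → ℂ => M *ᵥ x := by
  have := M.mulVecLin.continuous_of_finiteDimensional
  exact this

lemma dot_self_eq (x : Fin n → ℂ) :
    star x ⬝ᵥ x = ((∑ i, Complex.normSq (x i) : ℝ) : ℂ) := by
  push_cast
  simp [dotProduct, Complex.normSq_eq_conj_mul_self]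

lemma expand_mulVec (A C : Matrix (Fin n) (Fin n) ℂ) (a b : ℂ) (v : Fin n → ℂ) :
    (A - a • 1 - b • C) *ᵥ v = A *ᵥ v - a • v - b • (C *ᵥ v) := by
  simp [Matrix.sub_mulVec, Matrix.smul_mulVec, Matrix.one_mulVec]

lemma exists_unit_kernel {M : Matrix (Fin n) (Fin n) ℂ} (h : M.det = 0) :
    ∃ z : Fin n → ℂ, star z ⬝ᵥ z = 1 ∧ M *ᵥ z = 0 := by
  obtain ⟨v, hv0, hv⟩ := Matrix.exists_mulVec_eq_zero_iff.mpr h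
  set s : ℝ := ∑ i, Complex.normSq (v i) with hs
  have hspos : 0 < s := by
    have : ∃ i, v i ≠ 0 := by
      by_contra hc; push_neg at hc; exact hv0 (funext hc)
    obtain ⟨i, hi⟩ := this
    exact Finset.sum_pos' (fun j _ => Complex.normSq_nonneg _)
      ⟨i, Finset.mem_univ i, Complex.normSq_pos.mpr hi⟩
  set c : ℂ := (((Real.sqrt s)⁻¹ : ℝ) : ℂ) with hc
  refine ⟨c • v, ?_, ?_⟩
  · have h1 : star (c • v) ⬝ᵥ (c • v) = star c * c * (star v ⬝ᵥ v) := by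
      rw [star_smul, smul_dotProduct, dotProduct_smul]
      simp [smul_eq_mul]; ring
    rw [h1, dot_self_eq, ← hs, hc]
    simp only [Complex.star_def, Complex.conj_ofReal]
    norm_cast
    have hsq : Real.sqrt s ≠ 0 := ne_of_gt (Real.sqrt_pos.mpr hspos)
    field_simp
    rw [Real.sq_sqrt hspos.le]
  · rw [Matrix.mulVec_smul, hv, smul_zero]
end aux2

section key
variable {n : ℕ}

lemma real_smul_herm {c : ℝ} {H : Matrix (Fin n) (Fin n) ℂ} (hH : H.IsHermitian) :
    ((c : ℂ) • H).IsHermitian := by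
  unfold Matrix.IsHermitian at *
  rw [Matrix.conjTranspose_smul, hH]
  simp

lemma key_exists {A C : Matrix (Fin n) (Fin n) ℂ} (hA : A.IsHermitian) (hC : C.IsHermitian)
    (σ₀ : ℝ) (hsing : ∀ μ : ℝ, (A - (σ₀ : ℂ) • (1 : Matrix (Fin n) (Fin n) ℂ)
      - (μ : ℂ) • C).det = 0) (μ : ℝ) :
    ∃ x : Fin n → ℂ, star x ⬝ᵥ x = 1 ∧
      (A - (σ₀ : ℂ) • (1 : Matrix (Fin n) (Fin n) ℂ) - (μ : ℂ) • C) *ᵥ x = 0 ∧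
      star x ⬝ᵥ (C *ᵥ x) = 0 := by
  set M : ℝ → Matrix (Fin n) (Fin n) ℂ :=
    fun ν => A - (σ₀ : ℂ) • (1 : Matrix (Fin n) (Fin n) ℂ) - (ν : ℂ) • C with hMdef
  have hMh : ∀ ν, (M ν).IsHermitian := by
    intro ν
    exact (hA.sub (real_smul_herm Matrix.isHermitian_one)).sub (real_smul_herm hC)
  -- cross lemma
  have key_cross : ∀ (ν₁ ν₂ : ℝ), ν₁ ≠ ν₂ → ∀ y z : Fin n → ℂ,
      M ν₁ *ᵥ y = 0 → M ν₂ *ᵥ z = 0 → star y ⬝ᵥ (C *ᵥ z) = 0 := by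
    intro ν₁ ν₂ hne y z hy hz
    have hMeq : M ν₁ = M ν₂ + ((ν₂ : ℂ) - (ν₁ : ℂ)) • C := by
      simp only [hMdef, sub_smul]
      module
    have h1 : M ν₁ *ᵥ z = ((ν₂ : ℂ) - (ν₁ : ℂ)) • (C *ᵥ z) := by
      rw [hMeq, Matrix.add_mulVec, hz, Matrix.smul_mulVec, zero_add]
    have h2 : star y ⬝ᵥ (M ν₁ *ᵥ z) = 0 := by
      rw [herm_dot (hMh ν₁), hy]
      simp
    rw [h1, dotProduct_smul, smul_eq_mul] at h2
    have hne' : ((ν₂ : ℂ) - (ν₁ : ℂ)) ≠ 0 := by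
      rw [sub_ne_zero]
      exact_mod_cast hne.symm
    exact (mul_eq_zero.mp h2).resolve_left hne'
  -- the sequence of shifts
  set ν : ℕ → ℝ := fun k => μ + ((k : ℝ) + 1)⁻¹ with hνdef
  have hνne : ∀ k, ν k ≠ μ := by
    intro k
    have : (0 : ℝ) < ((k : ℝ) + 1)⁻¹ := by positivity
    simp only [hνdef]
    linarith
  have hνinj : Function.Injective ν := by
    intro a b h
    have h1 : ((a : ℝ) + 1)⁻¹ = ((b : ℝ) + 1)⁻¹ := by
      have := h
      simp only [hνdef] at this
      linarith
    have h2 : ((a : ℝ) + 1) = ((b : ℝ) + 1) := inv_injective h1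
    have h3 : (a : ℝ) = (b : ℝ) := by linarith
    exact_mod_cast h3
  choose z hz1 hz2 using fun k : ℕ => exists_unit_kernel (M := M (ν k)) (hsing (ν k))
  -- compactness
  set S : Set (Fin n → ℂ) := {x | star x ⬝ᵥ x = 1} with hSdef
  have hScl : IsClosed S := isClosed_eq cont_dot_self continuous_const
  have hSsub : S ⊆ Metric.closedBall 0 1 := by
    intro x hx
    simp only [Metric.mem_closedBall, dist_zero_right]
    rw [pi_norm_le_iff_of_nonneg zero_le_one]
    intro i
    have hx1 : (∑ j, Complex.normSq (x j)) = 1 := by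
      have hx' : star x ⬝ᵥ x = 1 := hx
      rw [dot_self_eq] at hx'
      exact_mod_cast hx'
    have hle : Complex.normSq (x i) ≤ 1 := by
      rw [← hx1]
      exact Finset.single_le_sum (fun j _ => Complex.normSq_nonneg _) (Finset.mem_univ i)
    have h2 : ‖x i‖ ^ 2 ≤ 1 := by
      rwa [← Complex.sq_norm] at hle
    nlinarith [norm_nonneg (x i)]
  have hScomp : IsCompact S :=
    (isCompact_closedBall (0 : Fin n → ℂ) 1).of_isClosed_subset hScl hSsub
  obtain ⟨x, hxS, φ, hφ, hlim⟩ := hScomp.tendsto_subseq (x := z) fun k => hz1 k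
  -- limit of shifts
  have hνlim : Filter.Tendsto (fun j => ν (φ j)) Filter.atTop (nhds μ) := by
    have h0 : Filter.Tendsto (fun k : ℕ => ((k : ℝ) + 1)⁻¹) Filter.atTop (nhds 0) := by
      simpa only [one_div] using tendsto_one_div_add_atTop_nhds_zero_nat (𝕜 := ℝ)
    have h1 : Filter.Tendsto ν Filter.atTop (nhds μ) := by
      have h0' := (tendsto_const_nhds (x := μ) (f := Filter.atTop (α := ℕ))).add h0
      simpa [hνdef] using h0'
    exact h1.comp hφ.tendsto_atTop
  -- kernel equation in expanded form
  have hAeq : ∀ k, A *ᵥ z k - (σ₀ : ℂ) • z k - ((ν k : ℝ) : ℂ) • (C *ᵥ z k) = 0 := by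
    intro k
    rw [← expand_mulVec]
    exact hz2 k
  have limA : Filter.Tendsto (fun j => A *ᵥ z (φ j)) Filter.atTop (nhds (A *ᵥ x)) :=
    ((cont_mulVec A).tendsto x).comp hlim
  have limσ : Filter.Tendsto (fun j => (σ₀ : ℂ) • z (φ j)) Filter.atTop
      (nhds ((σ₀ : ℂ) • x)) := tendsto_const_nhds.smul hlim
  have limC : Filter.Tendsto (fun j => C *ᵥ z (φ j)) Filter.atTop (nhds (C *ᵥ x)) :=
    ((cont_mulVec C).tendsto x).comp hlim
  have limν : Filter.Tendsto (fun j => ((ν (φ j) : ℝ) : ℂ)) Filter.atTop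
      (nhds ((μ : ℝ) : ℂ)) := (Complex.continuous_ofReal.tendsto μ).comp hνlim
  have limall : Filter.Tendsto
      (fun j => A *ᵥ z (φ j) - (σ₀ : ℂ) • z (φ j) - ((ν (φ j) : ℝ) : ℂ) • (C *ᵥ z (φ j)))
      Filter.atTop (nhds (A *ᵥ x - (σ₀ : ℂ) • x - ((μ : ℝ) : ℂ) • (C *ᵥ x))) :=
    (limA.sub limσ).sub (limν.smul limC)
  have limzero : Filter.Tendsto
      (fun j => A *ᵥ z (φ j) - (σ₀ : ℂ) • z (φ j) - ((ν (φ j) : ℝ) : ℂ) • (C *ᵥ z (φ j)))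
      Filter.atTop (nhds 0) :=
    tendsto_const_nhds.congr fun j => (hAeq (φ j)).symm
  have hxker : M μ *ᵥ x = 0 := by
    rw [hMdef]
    rw [expand_mulVec]
    exact tendsto_nhds_unique limall limzero
  -- cross vanishing
  have hcross : ∀ j k, φ j ≠ k → star (z (φ j)) ⬝ᵥ (C *ᵥ z k) = 0 := by
    intro j k hne
    exact key_cross (ν (φ j)) (ν k) (fun h => hne (hνinj h)) _ _ (hz2 _) (hz2 _)
  have hxk : ∀ k, star x ⬝ᵥ (C *ᵥ z k) = 0 := by
    intro k
    have h1 : Filter.Tendsto (fun j => star (z (φ j)) ⬝ᵥ (C *ᵥ z k)) Filter.atTop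
        (nhds (star x ⬝ᵥ (C *ᵥ z k))) :=
      ((cont_dot_left (C *ᵥ z k)).tendsto x).comp hlim
    have h2 : Filter.Tendsto (fun j => star (z (φ j)) ⬝ᵥ (C *ᵥ z k)) Filter.atTop
        (nhds 0) := by
      apply tendsto_const_nhds.congr'
      filter_upwards [Filter.eventually_gt_atTop k] with j hj
      exact (hcross j k (ne_of_gt (lt_of_lt_of_le hj (hφ.le_apply)))).symm
    exact tendsto_nhds_unique h1 h2
  have hxx : star x ⬝ᵥ (C *ᵥ x) = 0 := by
    have h1 : Filter.Tendsto (fun j => star x ⬝ᵥ (C *ᵥ z (φ j))) Filter.atTop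
        (nhds (star x ⬝ᵥ (C *ᵥ x))) :=
      (((cont_dot_right (star x)).comp (cont_mulVec C)).tendsto x).comp hlim
    have h2 : Filter.Tendsto (fun j => star x ⬝ᵥ (C *ᵥ z (φ j))) Filter.atTop (nhds 0) :=
      tendsto_const_nhds.congr fun j => (hxk (φ j)).symm
    exact tendsto_nhds_unique h1 h2
  exact ⟨x, hxS, hxker, hxx⟩
end key

theorem singular_pencil_implies_infinitely_many_2DEigenvalues
    {n : ℕ} (A C : Matrix (Fin n) (Fin n) ℂ)
    (hA : A.IsHermitian) (hC : C.IsHermitian) (hCind : IsIndefinite hC)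
    (σ₀ : ℝ)
    (hsing : ∀ μ : ℝ, (A - (σ₀ : ℂ) • (1 : Matrix (Fin n) (Fin n) ℂ)
      - (μ : ℂ) • C).det = 0) :
    (∀ μ : ℝ, ∃ x : Fin n → ℂ, star x ⬝ᵥ x = 1 ∧
      (A - (μ : ℂ) • C) *ᵥ x = ((σ₀ : ℝ) : ℂ) • x ∧
      star x ⬝ᵥ (C *ᵥ x) = 0) ∧
    (∀ μ : ℝ, Is2DEigenvalue A C μ σ₀) ∧
    {p : ℝ × ℝ | Is2DEigenvalue A C p.1 p.2}.Infinite := by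
  have main : ∀ μ : ℝ, ∃ x : Fin n → ℂ, star x ⬝ᵥ x = 1 ∧
      (A - (μ : ℂ) • C) *ᵥ x = ((σ₀ : ℝ) : ℂ) • x ∧
      star x ⬝ᵥ (C *ᵥ x) = 0 := by
    intro μ
    obtain ⟨x, h1, h2, h3⟩ := key_exists hA hC σ₀ hsing μ
    refine ⟨x, h1, ?_, h3⟩
    rw [expand_mulVec] at h2
    have h4 : A *ᵥ x - (μ : ℂ) • (C *ᵥ x) - (σ₀ : ℂ) • x = 0 := by
      rw [← h2]; module
    rw [Matrix.sub_mulVec, Matrix.smul_mulVec]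
    exact sub_eq_zero.mp h4
  refine ⟨main, ?_, ?_⟩
  · intro μ
    obtain ⟨x, h1, h2, h3⟩ := main μ
    exact ⟨x, h2, h3, h1⟩
  · apply Set.infinite_of_injective_forall_mem (f := fun μ : ℝ => ((μ, σ₀) : ℝ × ℝ))
    · intro a b h
      exact congrArg Prod.fst h
    · intro μ
      obtain ⟨x, h1, h2, h3⟩ := main μ
      exact ⟨x, h2, h3, h1⟩
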